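/- For any integer n ≥ 1, any θ ∈ 𝔽_q, and any elements α_1, …, α_n ∈ 𝔽_q, the determinant of the n × n matrix over 𝔽_q whose j-th column is (1, α_j, α_j^2, …, α_j^{n-2}, α_j^{n-1} − θ α_j^n)^T equals V(α_1, …, α_n) · (1 − θ · Σ_{i=1}^{n} α_i). -/

import Mathlib

open Finset Polynomial Matrix

/-- The key auxiliary determinant: replacing the last column of the (transposed)
Vandermonde matrix by the `n`-th powers multiplies the determinant by `∑ α i`. -/
lemma det_updateColumn_pow_n {F : Type*} [Field F] (n : ℕ) (hn : 1 ≤ n) (α : Fin n → F) :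
    ((Matrix.vandermonde α).updateCol ⟨n - 1, Nat.sub_lt hn one_pos⟩
        (fun j => α j ^ n)).det = (∑ i, α i) * (Matrix.vandermonde α).det := by
  set P : F[X] := ∏ i : Fin n, (X - C (α i)) with hP
  have hmonic : P.Monic := monic_prod_of_monic _ _ fun i _ => monic_X_sub_C _
  have hdeg : P.natDegree = n := by
    rw [hP, natDegree_prod_of_monic _ _ fun i _ => monic_X_sub_C _]
    simp
  set c : Fin n → F := fun k => -(P.coeff k) with hc
  have hcomb : ∀ j, α j ^ n = ∑ k : Fin n, c k • (Matrix.vandermonde α) j k := by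
    intro j
    have heval : P.eval (α j) = 0 := by
      rw [hP, eval_prod]
      exact Finset.prod_eq_zero (Finset.mem_univ j) (by simp)
    have hsum : P.eval (α j) = (∑ k ∈ Finset.range n, P.coeff k * α j ^ k) + α j ^ n := by
      rw [eval_eq_sum_range, hdeg, Finset.sum_range_succ]
      congr 1
      rw [show P.coeff n = 1 from hdeg ▸ hmonic.coeff_natDegree, one_mul]
    have : α j ^ n = -∑ k ∈ Finset.range n, P.coeff k * α j ^ k := by
      rw [heval] at hsum; linear_combination -hsum
    rw [this, ← Finset.sum_neg_distrib]
    rw [Finset.sum_range fun k => -(P.coeff k * α j ^ k)]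
    simp [hc, Matrix.vandermonde, neg_mul]
  have hlast : c ⟨n - 1, Nat.sub_lt hn one_pos⟩ = ∑ i, α i := by
    have := prod_X_sub_C_coeff_card_pred (Finset.univ : Finset (Fin n)) α
      (by simp only [Finset.card_univ, Fintype.card_fin]; omega)
    simp only [Finset.card_univ, Fintype.card_fin] at this
    simp [hc, hP, this]
  calc ((Matrix.vandermonde α).updateCol ⟨n - 1, Nat.sub_lt hn one_pos⟩
        (fun j => α j ^ n)).det
      = ((Matrix.vandermonde α).updateCol ⟨n - 1, Nat.sub_lt hn one_pos⟩
        (fun j => ∑ k : Fin n, c k • (Matrix.vandermonde α) j k)).det := by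
        rw [show (fun j => α j ^ n)
          = fun j => ∑ k : Fin n, c k • (Matrix.vandermonde α) j k from funext hcomb]
    _ = c ⟨n - 1, Nat.sub_lt hn one_pos⟩ • (Matrix.vandermonde α).det :=
        Matrix.det_updateCol_sum _ _ _
    _ = (∑ i, α i) * (Matrix.vandermonde α).det := by rw [hlast, smul_eq_mul]

theorem det_twisted_vandermonde {F : Type*} [Field F] [Fintype F]
    (n : ℕ) (hn : 1 ≤ n) (θ : F) (α : Fin n → F) :
    (Matrix.of fun i j : Fin n =>
        if (i : ℕ) = n - 1 then α j ^ (n - 1) - θ * α j ^ n else α j ^ (i : ℕ)).det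
      = (∏ i : Fin n, ∏ j ∈ Finset.Ioi i, (α j - α i)) * (1 - θ * ∑ i, α i) := by
  set last : Fin n := ⟨n - 1, Nat.sub_lt hn one_pos⟩ with hlast
  have hM : (Matrix.of fun i j : Fin n =>
        if (i : ℕ) = n - 1 then α j ^ (n - 1) - θ * α j ^ n else α j ^ (i : ℕ))
      = ((Matrix.vandermonde α).updateCol last
          (fun j => α j ^ (n - 1) - θ * α j ^ n))ᵀ := by
    ext i j
    simp only [Matrix.of_apply, Matrix.transpose_apply, Matrix.updateCol_apply,
      Matrix.vandermonde_apply]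
    have : i = last ↔ (i : ℕ) = n - 1 := by
      rw [Fin.ext_iff]
    rcases eq_or_ne (i : ℕ) (n - 1) with h | h
    · rw [if_pos h, if_pos (this.mpr h)]
    · rw [if_neg h, if_neg (fun hh => h (this.mp hh))]
  rw [hM, Matrix.det_transpose]
  have hsplit : (fun j => α j ^ (n - 1) - θ * α j ^ n)
      = (fun j => (Matrix.vandermonde α) j last) + (-θ) • (fun j => α j ^ n) := by
    ext j
    simp [Matrix.vandermonde_apply, hlast, sub_eq_add_neg, neg_mul]
  rw [hsplit, Matrix.det_updateCol_add, Matrix.det_updateCol_smul,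
    Matrix.updateCol_eq_self, det_updateColumn_pow_n n hn α, Matrix.det_vandermonde]
  ring
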